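/- Let d be the quasi-distance d((s,x),(t,y)) := ρ(t−s, θ_{t,s}(x) − y) as above, and define the ball B((s,x),δ) := {(t,y) ∈ S : d((s,x),(t,y)) ≤ δ}. Then there exists C₁ = C₁(n,d) ≥ 1, independent of (s,x) and δ > 0, such that C₁^{-1} δ^{2+n²d} ≤ Leb(B((s,x),δ)) ≤ C₁ δ^{2+n²d}, where Leb denotes Lebesgue measure on ℝ^{1+nd}. In particular the measure space (S, d, Leb) satisfies the doubling property for small radii. -/

import Mathlib

open scoped BigOperators
open MeasureTheory
open scoped ENNReal

/-- Euclidean norm of the i-th d-dimensional block of z ∈ ℝ^{nd}. -/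
noncomputable def blockNorm (n d : ℕ) (z : EuclideanSpace ℝ (Fin n × Fin d)) (i : Fin n) : ℝ :=
  Real.sqrt (∑ q : Fin d, (z (i, q)) ^ 2)

/-- The parabolic quasi-norm ρ(u,z) = |u|^{1/2} + Σ_{i=1}^n |z_i|^{1/(2i-1)}. -/
noncomputable def rho (n d : ℕ) (u : ℝ) (z : EuclideanSpace ℝ (Fin n × Fin d)) : ℝ :=
  |u| ^ ((1:ℝ)/2) + ∑ i : Fin n, blockNorm n d z i ^ ((1:ℝ) / (2 * (i:ℕ) + 1))

namespace Stmt12Aux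

lemma vol_box (n d : ℕ) (a b : Fin n × Fin d → ℝ) :
    volume {w : EuclideanSpace ℝ (Fin n × Fin d) | ∀ iq, w iq ∈ Set.Icc (a iq) (b iq)} =
      ∏ iq : Fin n × Fin d, ENNReal.ofReal (b iq - a iq) := by
  have hm := EuclideanSpace.volume_preserving_symm_measurableEquiv_toLp (Fin n × Fin d)
  have hset : {w : EuclideanSpace ℝ (Fin n × Fin d) | ∀ iq, w iq ∈ Set.Icc (a iq) (b iq)}
      = (MeasurableEquiv.toLp 2 (Fin n × Fin d → ℝ)).symm ⁻¹'
        (Set.univ.pi fun iq => Set.Icc (a iq) (b iq)) := by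
    ext w
    simp only [Set.mem_setOf_eq, Set.mem_preimage, Set.mem_univ_pi,
      MeasurableEquiv.coe_toLp_symm]
  rw [hset, hm.measure_preimage
    ((MeasurableSet.univ_pi fun _ => measurableSet_Icc).nullMeasurableSet),
    volume_pi_pi]
  simp [Real.volume_Icc]

lemma sum_odds (n : ℕ) : ∑ i : Fin n, (2 * (i:ℕ) + 1) = n ^ 2 := by
  rw [Fin.sum_univ_eq_sum_range (fun i => 2 * i + 1)]
  induction n with
  | zero => simp
  | succ m ih => rw [Finset.sum_range_succ, ih]; ring

lemma prod_const_pow (n d : ℕ) (b : ℝ) :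
    ∏ iq : Fin n × Fin d, (2 * b ^ (2 * (iq.1:ℕ) + 1)) = 2 ^ (n * d) * b ^ (n ^ 2 * d) := by
  rw [Finset.prod_mul_distrib, Finset.prod_const, Finset.prod_pow_eq_pow_sum]
  congr 1
  · rw [Finset.card_univ]; simp [Fintype.card_prod]
  · congr 1
    calc ∑ iq : Fin n × Fin d, (2 * (iq.1:ℕ) + 1)
        = ∑ i : Fin n, ∑ _q : Fin d, (2 * (i:ℕ) + 1) := by rw [Fintype.sum_prod_type]
    _ = ∑ i : Fin n, d * (2 * (i:ℕ) + 1) := by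
        simp [Finset.sum_const, mul_comm]
    _ = d * ∑ i : Fin n, (2 * (i:ℕ) + 1) := by rw [Finset.mul_sum]
    _ = n ^ 2 * d := by rw [sum_odds]; ring

lemma blockNorm_nonneg (n d : ℕ) (z : EuclideanSpace ℝ (Fin n × Fin d)) (i : Fin n) :
    0 ≤ blockNorm n d z i := Real.sqrt_nonneg _

lemma abs_coord_le_blockNorm (n d : ℕ) (z : EuclideanSpace ℝ (Fin n × Fin d)) (i : Fin n)
    (q : Fin d) : |z (i, q)| ≤ blockNorm n d z i := by
  rw [← Real.sqrt_sq_eq_abs]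
  exact Real.sqrt_le_sqrt (Finset.single_le_sum (fun q' _ => sq_nonneg (z (i, q')))
    (Finset.mem_univ q))

lemma blockNorm_le_of_coords (n d : ℕ) (z : EuclideanSpace ℝ (Fin n × Fin d)) (i : Fin n)
    (a : ℝ) (ha : 0 ≤ a) (h : ∀ q, |z (i, q)| ≤ a) :
    blockNorm n d z i ≤ Real.sqrt d * a := by
  have : blockNorm n d z i ≤ Real.sqrt (∑ _q : Fin d, a ^ 2) := by
    apply Real.sqrt_le_sqrt
    apply Finset.sum_le_sum
    intro q _
    calc z (i, q) ^ 2 = |z (i, q)| ^ 2 := (sq_abs _).symm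
    _ ≤ a ^ 2 := pow_le_pow_left₀ (abs_nonneg _) (h q) 2
  refine this.trans ?_
  rw [Finset.sum_const, Finset.card_univ, Fintype.card_fin, nsmul_eq_mul,
    Real.sqrt_mul (by positivity), Real.sqrt_sq ha]

lemma rpow_inv_nat_le_iff (x r : ℝ) (m : ℕ) (hm : 0 < m) (hx : 0 ≤ x) (hr : 0 ≤ r) :
    x ^ ((1:ℝ) / (m:ℝ)) ≤ r ↔ x ≤ r ^ m := by
  rw [one_div, Real.rpow_inv_le_iff_of_pos hx hr (by exact_mod_cast hm),
    Real.rpow_natCast]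

lemma rho_le_iff_aux (n d : ℕ) (u : ℝ) (z : EuclideanSpace ℝ (Fin n × Fin d)) (δ : ℝ)
    (hδ : 0 < δ) (h : rho n d u z ≤ δ) :
    |u| ≤ δ ^ 2 ∧ ∀ i : Fin n, blockNorm n d z i ≤ δ ^ (2 * (i:ℕ) + 1) := by
  have hterms : ∀ i : Fin n, 0 ≤ blockNorm n d z i ^ ((1:ℝ) / (2 * (i:ℕ) + 1)) :=
    fun i => Real.rpow_nonneg (blockNorm_nonneg n d z i) _
  have hsum : 0 ≤ ∑ i : Fin n, blockNorm n d z i ^ ((1:ℝ) / (2 * (i:ℕ) + 1)) :=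
    Finset.sum_nonneg fun i _ => hterms i
  have h1 : |u| ^ ((1:ℝ)/2) ≤ δ := by unfold rho at h; linarith
  have h2 : ∀ i : Fin n, blockNorm n d z i ^ ((1:ℝ) / (2 * (i:ℕ) + 1)) ≤ δ := by
    intro i
    have := Finset.single_le_sum (f := fun i : Fin n =>
      blockNorm n d z i ^ ((1:ℝ) / (2 * (i:ℕ) + 1))) (fun j _ => hterms j) (Finset.mem_univ i)
    unfold rho at h
    have habs : (0:ℝ) ≤ |u| ^ ((1:ℝ)/2) := Real.rpow_nonneg (abs_nonneg u) _
    linarith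
  constructor
  · have := (rpow_inv_nat_le_iff |u| δ 2 (by norm_num) (abs_nonneg u) hδ.le).mp (by
      simpa using h1)
    simpa using this
  · intro i
    have := (rpow_inv_nat_le_iff (blockNorm n d z i) δ (2 * (i:ℕ) + 1) (by omega)
      (blockNorm_nonneg n d z i) hδ.le).mp (by
        have := h2 i
        convert this using 3
        push_cast
        ring)
    exact this

lemma rho_le_of_box (n d : ℕ) (hn : 1 ≤ n) (hd : 1 ≤ d) (u δ : ℝ) (hδ : 0 < δ)
    (z : EuclideanSpace ℝ (Fin n × Fin d))
    (hu : |u| ≤ δ ^ 2 / 4)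
    (hz : ∀ i : Fin n, ∀ q : Fin d,
      |z (i, q)| ≤ (δ * (2 * n * Real.sqrt d)⁻¹) ^ (2 * (i:ℕ) + 1)) :
    rho n d u z ≤ δ := by
  have hd0 : (0:ℝ) < d := by exact_mod_cast Nat.lt_of_lt_of_le Nat.zero_lt_one hd
  have hn0 : (0:ℝ) < n := by exact_mod_cast Nat.lt_of_lt_of_le Nat.zero_lt_one hn
  have hsd1 : 1 ≤ Real.sqrt d := by
    rw [show (1:ℝ) = Real.sqrt 1 by simp]
    exact Real.sqrt_le_sqrt (by exact_mod_cast hd)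
  have hsd0 : 0 < Real.sqrt d := lt_of_lt_of_le one_pos hsd1
  set c : ℝ := (2 * n * Real.sqrt d)⁻¹ with hc
  have hc0 : 0 < c := by rw [hc]; positivity
  have h1 : |u| ^ ((1:ℝ)/2) ≤ δ / 2 := by
    have h := (rpow_inv_nat_le_iff |u| (δ/2) 2 (by norm_num) (abs_nonneg u)
      (by positivity)).mpr (by nlinarith)
    norm_num at h
    exact h
  have h2 : ∀ i : Fin n,
      blockNorm n d z i ^ ((1:ℝ) / (2 * (i:ℕ) + 1)) ≤ δ / (2 * n) := by
    intro i
    set m : ℕ := 2 * (i:ℕ) + 1 with hm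
    have hbb : blockNorm n d z i ≤ Real.sqrt d * (δ * c) ^ m :=
      blockNorm_le_of_coords n d z i _ (by positivity) (hz i)
    have hkey : Real.sqrt d * (δ * c) ^ m ≤ (δ / (2 * n)) ^ m := by
      have hsplit : (δ * c) ^ m = δ ^ m * ((2 * n : ℝ))⁻¹ ^ m * (Real.sqrt d)⁻¹ ^ m := by
        rw [hc, mul_inv, mul_pow, mul_pow]; ring
      have hinv1 : (Real.sqrt d)⁻¹ ≤ 1 := by
        rw [inv_le_one_iff₀]; right; exact hsd1
      have hmono : (Real.sqrt d)⁻¹ ^ m ≤ (Real.sqrt d)⁻¹ ^ 1 :=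
        pow_le_pow_of_le_one (by positivity) hinv1 (by omega)
      have : Real.sqrt d * (Real.sqrt d)⁻¹ ^ m ≤ 1 := by
        calc Real.sqrt d * (Real.sqrt d)⁻¹ ^ m ≤ Real.sqrt d * (Real.sqrt d)⁻¹ := by
              rw [← pow_one (Real.sqrt d)⁻¹] ; exact mul_le_mul_of_nonneg_left
                (by rw [pow_one]; exact hmono.trans_eq (pow_one _)) hsd0.le
        _ = 1 := mul_inv_cancel₀ hsd0.ne'
      calc Real.sqrt d * (δ * c) ^ m
          = (δ ^ m * ((2 * n : ℝ))⁻¹ ^ m) * (Real.sqrt d * (Real.sqrt d)⁻¹ ^ m) := by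
            rw [hsplit]; ring
      _ ≤ (δ ^ m * ((2 * n : ℝ))⁻¹ ^ m) * 1 := by
            apply mul_le_mul_of_nonneg_left this (by positivity)
      _ = (δ / (2 * n)) ^ m := by rw [mul_one, div_pow, inv_pow, div_eq_mul_inv]
    have hgoal := (rpow_inv_nat_le_iff (blockNorm n d z i) (δ/(2*n)) m (by omega)
      (blockNorm_nonneg n d z i) (by positivity)).mpr (hbb.trans hkey)
    rw [hm] at hgoal
    push_cast at hgoal
    exact hgoal
  have hsum : ∑ i : Fin n, blockNorm n d z i ^ ((1:ℝ) / (2 * (i:ℕ) + 1)) ≤ δ / 2 := by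
    calc ∑ i : Fin n, blockNorm n d z i ^ ((1:ℝ) / (2 * (i:ℕ) + 1))
        ≤ ∑ _i : Fin n, δ / (2 * n) := Finset.sum_le_sum fun i _ => h2 i
    _ = n * (δ / (2 * n)) := by rw [Finset.sum_const, Finset.card_univ, Fintype.card_fin,
        nsmul_eq_mul]
    _ = δ / 2 := by field_simp
  unfold rho
  linarith

lemma rho_continuous (n d : ℕ) :
    Continuous (fun p : ℝ × EuclideanSpace ℝ (Fin n × Fin d) => rho n d p.1 p.2) := by
  unfold rho
  apply Continuous.add
  · have h : (fun p : ℝ × EuclideanSpace ℝ (Fin n × Fin d) => |p.1| ^ ((1:ℝ)/2))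
        = fun p => Real.sqrt |p.1| := by
      funext p; rw [Real.sqrt_eq_rpow]
    rw [h]
    exact Real.continuous_sqrt.comp (continuous_abs.comp continuous_fst)
  · apply continuous_finset_sum
    intro i _
    have houter : Continuous fun x : ℝ => x ^ ((1:ℝ) / (2 * (i:ℕ) + 1)) :=
      continuous_iff_continuousAt.mpr fun x =>
        Real.continuousAt_rpow_const x _ (Or.inr (by positivity))
    apply houter.comp
    unfold blockNorm
    apply Real.continuous_sqrt.comp
    apply continuous_finset_sum
    intro q _
    exact ((EuclideanSpace.proj ((i, q) : Fin n × Fin d)).continuous.comp continuous_snd).pow 2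

end Stmt12Aux

open Stmt12Aux in
/-- Volume of the quasi-metric balls B((s,x),δ) = {(t,y) ∈ S : ρ(t−s, θ_{t,s}(x)−y) ≤ δ}
is comparable to δ^{2+n²d}, uniformly in the center (s,x) and (small) radius δ. -/
theorem stmt_12 (n d : ℕ) (hn : 1 ≤ n) (hd : 1 ≤ d) (T : ℝ) (hT : 0 < T) (κ : NNReal)
    (F : ℝ → EuclideanSpace ℝ (Fin n × Fin d) → EuclideanSpace ℝ (Fin n × Fin d))
    (hLip : ∀ t, LipschitzWith κ (F t))
    (θ : ℝ → ℝ → EuclideanSpace ℝ (Fin n × Fin d) → EuclideanSpace ℝ (Fin n × Fin d))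
    (hflow0 : ∀ s x, θ s s x = x)
    (hflow : ∀ s x t, HasDerivAt (fun u => θ u s x) (F t (θ t s x)) t) :
    ∃ C₁ : ℝ, 1 ≤ C₁ ∧ ∀ (s : ℝ) (x : EuclideanSpace ℝ (Fin n × Fin d)) (δ : ℝ),
      0 < δ → |s| + δ ^ 2 ≤ T →
      C₁⁻¹ * δ ^ (2 + n ^ 2 * d) ≤
        (volume {p : ℝ × EuclideanSpace ℝ (Fin n × Fin d) |
          p.1 ∈ Set.Icc (-T) T ∧ rho n d (p.1 - s) (θ p.1 s x - p.2) ≤ δ}).toReal ∧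
      (volume {p : ℝ × EuclideanSpace ℝ (Fin n × Fin d) |
          p.1 ∈ Set.Icc (-T) T ∧ rho n d (p.1 - s) (θ p.1 s x - p.2) ≤ δ}).toReal
        ≤ C₁ * δ ^ (2 + n ^ 2 * d) := by
  classical
  have hd0 : (0:ℝ) < d := by exact_mod_cast Nat.lt_of_lt_of_le Nat.zero_lt_one hd
  have hn0 : (0:ℝ) < n := by exact_mod_cast Nat.lt_of_lt_of_le Nat.zero_lt_one hn
  have hsd0 : 0 < Real.sqrt d := Real.sqrt_pos.mpr hd0
  set c : ℝ := (2 * n * Real.sqrt d)⁻¹ with hc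
  have hc0 : 0 < c := by rw [hc]; positivity
  set Ku : ℝ := 2 ^ (n * d) * 2 with hKu
  set Kl : ℝ := 2 ^ (n * d) * c ^ (n ^ 2 * d) / 2 with hKl
  have hKl0 : 0 < Kl := by rw [hKl]; positivity
  refine ⟨max Ku Kl⁻¹, ?_, ?_⟩
  · refine le_trans ?_ (le_max_left _ _)
    have h2 : (1:ℝ) ≤ 2 ^ (n * d) := one_le_pow₀ one_le_two
    rw [hKu]; nlinarith
  intro s x δ hδ hsT
  set A := {p : ℝ × EuclideanSpace ℝ (Fin n × Fin d) |
      p.1 ∈ Set.Icc (-T) T ∧ rho n d (p.1 - s) (θ p.1 s x - p.2) ≤ δ} with hA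
  have hθc : Continuous fun t => θ t s x :=
    continuous_iff_continuousAt.2 fun t => (hflow s x t).continuousAt
  have hf : Continuous fun p : ℝ × EuclideanSpace ℝ (Fin n × Fin d) =>
      rho n d (p.1 - s) (θ p.1 s x - p.2) :=
    (rho_continuous n d).comp (Continuous.prodMk (continuous_fst.sub continuous_const)
      ((hθc.comp continuous_fst).sub continuous_snd))
  have hAm : MeasurableSet A := by
    have : A = (Prod.fst ⁻¹' Set.Icc (-T) T) ∩
        {p : ℝ × EuclideanSpace ℝ (Fin n × Fin d) |
          rho n d (p.1 - s) (θ p.1 s x - p.2) ≤ δ} := rfl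
    rw [this]
    exact ((isClosed_Icc.preimage continuous_fst).inter
      (isClosed_le hf continuous_const)).measurableSet
  have hAvol : volume A = ∫⁻ t, volume (Prod.mk t ⁻¹' A) := by
    rw [Measure.volume_eq_prod, Measure.prod_apply hAm]
  -- upper bound
  set U : ℝ≥0∞ := ENNReal.ofReal
      (∏ iq : Fin n × Fin d, (2 * δ ^ (2 * (iq.1:ℕ) + 1))) with hU
  have hsecU : ∀ t, volume (Prod.mk t ⁻¹' A)
      ≤ (Set.Icc (s - δ^2) (s + δ^2)).indicator (fun _ => U) t := by
    intro t
    by_cases ht : t ∈ Set.Icc (s - δ^2) (s + δ^2)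
    · rw [Set.indicator_of_mem ht]
      have hsub : Prod.mk t ⁻¹' A ⊆ {w : EuclideanSpace ℝ (Fin n × Fin d) |
          ∀ iq : Fin n × Fin d, w iq ∈ Set.Icc
            (θ t s x iq - δ ^ (2 * (iq.1:ℕ) + 1))
            (θ t s x iq + δ ^ (2 * (iq.1:ℕ) + 1))} := by
        intro y hy
        simp only [hA, Set.mem_preimage, Set.mem_setOf_eq] at hy
        obtain ⟨-, hrho⟩ := hy
        obtain ⟨-, hblock⟩ := rho_le_iff_aux n d _ _ δ hδ hrho
        rintro ⟨i, q⟩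
        have h1 : |θ t s x (i, q) - y (i, q)| ≤ δ ^ (2 * (i:ℕ) + 1) := by
          have h2 := (abs_coord_le_blockNorm n d (θ t s x - y) i q).trans (hblock i)
          simpa [PiLp.sub_apply] using h2
        obtain ⟨h1a, h1b⟩ := abs_le.mp h1
        rw [Set.mem_Icc]
        constructor <;> simp only <;> linarith
      calc volume (Prod.mk t ⁻¹' A) ≤ _ := measure_mono hsub
      _ = ∏ iq : Fin n × Fin d, ENNReal.ofReal
            ((θ t s x iq + δ ^ (2 * (iq.1:ℕ) + 1)) -
             (θ t s x iq - δ ^ (2 * (iq.1:ℕ) + 1))) := vol_box n d _ _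
      _ = U := by
          rw [hU, ENNReal.ofReal_prod_of_nonneg (fun iq _ => by positivity)]
          exact Finset.prod_congr rfl fun iq _ => by rw [show
            (θ t s x iq + δ ^ (2 * (iq.1:ℕ) + 1)) -
             (θ t s x iq - δ ^ (2 * (iq.1:ℕ) + 1)) = 2 * δ ^ (2 * (iq.1:ℕ) + 1) by ring]
    · rw [Set.indicator_of_notMem ht]
      have hempty : Prod.mk t ⁻¹' A = ∅ := by
        rw [Set.eq_empty_iff_forall_notMem]
        intro y hy
        simp only [hA, Set.mem_preimage, Set.mem_setOf_eq] at hy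
        obtain ⟨-, hrho⟩ := hy
        have habs := (rho_le_iff_aux n d _ _ δ hδ hrho).1
        obtain ⟨ha, hb⟩ := abs_le.mp habs
        exact ht (Set.mem_Icc.mpr ⟨by linarith, by linarith⟩)
      rw [hempty]
      simp
  have hupper : volume A ≤ U * ENNReal.ofReal (2 * δ^2) := by
    rw [hAvol]
    calc ∫⁻ t, volume (Prod.mk t ⁻¹' A)
        ≤ ∫⁻ t, (Set.Icc (s - δ^2) (s + δ^2)).indicator (fun _ => U) t :=
          lintegral_mono hsecU
    _ = U * volume (Set.Icc (s - δ^2) (s + δ^2)) :=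
          lintegral_indicator_const measurableSet_Icc U
    _ = U * ENNReal.ofReal (2 * δ^2) := by
          rw [Real.volume_Icc]
          congr 1
          ring_nf
  have hfin : volume A ≠ ⊤ :=
    (lt_of_le_of_lt hupper (ENNReal.mul_lt_top ENNReal.ofReal_lt_top
      ENNReal.ofReal_lt_top)).ne
  have hUr : (volume A).toReal ≤ Ku * δ ^ (2 + n ^ 2 * d) := by
    have heq : U * ENNReal.ofReal (2 * δ^2) = ENNReal.ofReal (Ku * δ ^ (2 + n ^ 2 * d)) := by
      rw [hU, ← ENNReal.ofReal_mul (by positivity), prod_const_pow n d δ]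
      congr 1
      rw [pow_add, hKu]
      ring
    exact ENNReal.toReal_le_of_le_ofReal (by positivity) (heq ▸ hupper)
  -- lower bound
  set L : ℝ≥0∞ := ENNReal.ofReal
      (∏ iq : Fin n × Fin d, (2 * (δ * c) ^ (2 * (iq.1:ℕ) + 1))) with hL
  have hsecL : ∀ t, (Set.Icc (s - δ^2/4) (s + δ^2/4)).indicator (fun _ => L) t
      ≤ volume (Prod.mk t ⁻¹' A) := by
    intro t
    by_cases ht : t ∈ Set.Icc (s - δ^2/4) (s + δ^2/4)
    · rw [Set.indicator_of_mem ht]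
      obtain ⟨ht1, ht2⟩ := Set.mem_Icc.mp ht
      have hbox : {w : EuclideanSpace ℝ (Fin n × Fin d) |
          ∀ iq : Fin n × Fin d, w iq ∈ Set.Icc
            (θ t s x iq - (δ * c) ^ (2 * (iq.1:ℕ) + 1))
            (θ t s x iq + (δ * c) ^ (2 * (iq.1:ℕ) + 1))} ⊆ Prod.mk t ⁻¹' A := by
        intro y hy
        simp only [hA, Set.mem_preimage, Set.mem_setOf_eq]
        have habs_s1 := le_abs_self s
        have habs_s2 := neg_abs_le s
        have hδ4 : 0 < δ^2/4 := by positivity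
        refine ⟨Set.mem_Icc.mpr ⟨by nlinarith, by nlinarith⟩, ?_⟩
        apply rho_le_of_box n d hn hd _ _ hδ
        · rw [abs_le]; constructor <;> linarith
        · intro i q
          have hyiq := hy (i, q)
          rw [Set.mem_Icc] at hyiq
          simp only at hyiq
          rw [← hc]
          have heq : (θ t s x - y) (i, q) = θ t s x (i, q) - y (i, q) :=
            PiLp.sub_apply _ _ _ _
          rw [heq, abs_le]
          constructor <;> linarith [hyiq.1, hyiq.2]
      calc L = volume {w : EuclideanSpace ℝ (Fin n × Fin d) |
          ∀ iq : Fin n × Fin d, w iq ∈ Set.Icc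
            (θ t s x iq - (δ * c) ^ (2 * (iq.1:ℕ) + 1))
            (θ t s x iq + (δ * c) ^ (2 * (iq.1:ℕ) + 1))} := by
            rw [vol_box n d _ _, hL,
              ENNReal.ofReal_prod_of_nonneg (fun iq _ => by positivity)]
            exact Finset.prod_congr rfl fun iq _ => by rw [show
              (θ t s x iq + (δ * c) ^ (2 * (iq.1:ℕ) + 1)) -
               (θ t s x iq - (δ * c) ^ (2 * (iq.1:ℕ) + 1))
                 = 2 * (δ * c) ^ (2 * (iq.1:ℕ) + 1) by ring]
      _ ≤ volume (Prod.mk t ⁻¹' A) := measure_mono hbox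
    · rw [Set.indicator_of_notMem ht]
      exact zero_le
  have hlower : L * ENNReal.ofReal (δ^2/2) ≤ volume A := by
    rw [hAvol]
    calc L * ENNReal.ofReal (δ^2/2)
        = ∫⁻ t, (Set.Icc (s - δ^2/4) (s + δ^2/4)).indicator (fun _ => L) t := by
          rw [lintegral_indicator_const measurableSet_Icc, Real.volume_Icc]
          congr 1
          ring_nf
    _ ≤ ∫⁻ t, volume (Prod.mk t ⁻¹' A) := lintegral_mono hsecL
  have hLr : Kl * δ ^ (2 + n ^ 2 * d) ≤ (volume A).toReal := by
    have heq : L * ENNReal.ofReal (δ^2/2) = ENNReal.ofReal (Kl * δ ^ (2 + n ^ 2 * d)) := by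
      rw [hL, ← ENNReal.ofReal_mul (by positivity), prod_const_pow n d (δ * c)]
      congr 1
      rw [pow_add, mul_pow, hKl]
      ring
    have h := ENNReal.toReal_mono hfin (heq ▸ hlower)
    rwa [ENNReal.toReal_ofReal (by positivity)] at h
  constructor
  · refine le_trans ?_ hLr
    have hCinv : (max Ku Kl⁻¹)⁻¹ ≤ Kl := by
      have h1 : Kl⁻¹ ≤ max Ku Kl⁻¹ := le_max_right _ _
      calc (max Ku Kl⁻¹)⁻¹ ≤ (Kl⁻¹)⁻¹ := by
            apply inv_anti₀ (by positivity) h1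
      _ = Kl := inv_inv Kl
    exact mul_le_mul_of_nonneg_right hCinv (by positivity)
  · exact hUr.trans (mul_le_mul_of_nonneg_right (le_max_left _ _) (by positivity))
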